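/- Let n₁ ≤ n₂ ≤ n₃ be integers with n₁ ≥ 2 and 1/n₁ + 1/n₂ + 1/n₃ < 1. Then the quadratic polynomial r² + 2r(c_{2n₁} − c_{2n₂}) + 2(1 − 2c_{2n₁}c_{2n₂} − c_{2n₃}) in r, where c_{2n} = cos(π/n), has a real root; equivalently, its discriminant is nonnegative. -/

import Mathlib

open Real

private lemma cos_pi_div_nonneg (n : ℕ) (h : 2 ≤ n) : 0 ≤ Real.cos (π / n) := by
  have hn : (2:ℝ) ≤ n := by exact_mod_cast h
  apply Real.cos_nonneg_of_mem_Icc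
  constructor
  · have : (0:ℝ) ≤ π / n := by positivity
    nlinarith [Real.pi_pos]
  · rw [div_le_div_iff₀ (by positivity) (by norm_num)]
    nlinarith [Real.pi_pos]

private lemma cos_pi_div_mono (m n : ℕ) (h2 : 2 ≤ m) (h : m ≤ n) :
    Real.cos (π / m) ≤ Real.cos (π / n) := by
  have hm : (0:ℝ) < m := by positivity
  have hn : (0:ℝ) < n := by exact_mod_cast lt_of_lt_of_le (by omega : 0 < m) h
  apply Real.cos_le_cos_of_nonneg_of_le_pi
  · positivity
  · rw [div_le_iff₀ hm]
    have hm2 : (2:ℝ) ≤ m := by exact_mod_cast h2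
    nlinarith [Real.pi_pos, mul_le_mul_of_nonneg_left hm2 Real.pi_pos.le]
  · apply div_le_div_of_nonneg_left Real.pi_pos.le hm
    exact_mod_cast h

private lemma cos_pi_div_lb (n : ℕ) (h : 0 < n) :
    1 - π ^ 2 / (2 * (n:ℝ) ^ 2) ≤ Real.cos (π / n) := by
  have hn : (0:ℝ) < n := by exact_mod_cast h
  have := Real.one_sub_sq_div_two_le_cos (x := π / n)
  have heq : (π / n) ^ 2 / 2 = π ^ 2 / (2 * (n:ℝ) ^ 2) := by
    field_simp
  rwa [heq] at this

private lemma key_ineq (n₁ n₂ n₃ : ℕ)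
    (h2 : 2 ≤ n₁) (h12 : n₁ ≤ n₂) (h23 : n₂ ≤ n₃)
    (hhyp : (1 : ℝ) / n₁ + 1 / n₂ + 1 / n₃ < 1) :
    2 ≤ (Real.cos (π / n₁) + Real.cos (π / n₂)) ^ 2 + 2 * Real.cos (π / n₃) := by
  have h2' : 2 ≤ n₂ := le_trans h2 h12
  have h3' : 2 ≤ n₃ := le_trans h2' h23
  have hc1 := cos_pi_div_nonneg n₁ h2
  have hc2 := cos_pi_div_nonneg n₂ h2'
  have hpi : π ^ 2 ≤ 12.25 := by nlinarith [Real.pi_lt_d2, Real.pi_pos]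
  rcases lt_or_ge n₁ 3 with hn1 | hn1
  · -- n₁ = 2
    have hn1 : n₁ = 2 := by omega
    rcases lt_or_ge n₂ 3 with hn2 | hn2
    · -- n₂ = 2 : contradiction
      exfalso
      have hn2 : n₂ = 2 := by omega
      have hn3 : (0:ℝ) < n₃ := by positivity
      have : (0:ℝ) < 1 / n₃ := by positivity
      rw [hn1, hn2] at hhyp
      norm_num at hhyp
      linarith
    rcases lt_or_ge n₂ 4 with hn2' | hn2'
    · -- n₂ = 3, show n₃ ≥ 7
      have hn2 : n₂ = 3 := by omega
      have hn3 : 7 ≤ n₃ := by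
        by_contra hlt
        push_neg at hlt
        have hn3' : (0:ℝ) < n₃ := by positivity
        have h6 : (n₃:ℝ) ≤ 6 := by exact_mod_cast (by omega : n₃ ≤ 6)
        have h16 : (1:ℝ)/6 ≤ 1/n₃ := by
          apply one_div_le_one_div_of_le <;> linarith
        simp only [one_div] at h16
        rw [hn1, hn2] at hhyp
        norm_num at hhyp
        linarith
      -- c₂ = cos(π/3) = 1/2, c₃ ≥ cos(π/7) ≥ 1 - π²/98 ≥ 7/8
      have hcos3 : Real.cos (π / 3) = 1/2 := by
        rw [Real.cos_pi_div_three]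
      have hc3 : Real.cos (π / 7) ≤ Real.cos (π / n₃) :=
        cos_pi_div_mono 7 n₃ (by norm_num) hn3
      have hlb := cos_pi_div_lb 7 (by norm_num)
      have hcos2 : Real.cos (π / 2) = 0 := Real.cos_pi_div_two
      rw [hn1, hn2]
      push_cast at hlb ⊢
      rw [hcos2, hcos3]
      nlinarith [hc1, hc3]
    · -- n₂ ≥ 4, show n₃ ≥ 5
      have hn3 : 5 ≤ n₃ := by
        by_contra hlt
        push_neg at hlt
        have hn2eq : n₂ = 4 := by omega
        have hn3eq : n₃ = 4 := by omega
        rw [hn1, hn2eq, hn3eq] at hhyp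
        norm_num at hhyp
      have hc2' : Real.cos (π / 4) ≤ Real.cos (π / n₂) :=
        cos_pi_div_mono 4 n₂ (by norm_num) hn2'
      have hc3 : Real.cos (π / 5) ≤ Real.cos (π / n₃) :=
        cos_pi_div_mono 5 n₃ (by norm_num) hn3
      have hlb := cos_pi_div_lb 5 (by norm_num)
      have hcos4 : Real.cos (π / 4) = Real.sqrt 2 / 2 := Real.cos_pi_div_four
      have hs2 : Real.sqrt 2 ^ 2 = 2 := Real.sq_sqrt (by norm_num)
      have hs2' : (1:ℝ) ≤ Real.sqrt 2 := by nlinarith [Real.sqrt_nonneg 2]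
      have hcos2 : Real.cos (π / 2) = 0 := Real.cos_pi_div_two
      rw [hn1]
      push_cast at hlb ⊢
      rw [hcos2]
      nlinarith [hc2, hc2', hc3, hlb, hpi, sq_nonneg (Real.cos (π / n₂) - Real.sqrt 2 / 2)]
  · -- n₁ ≥ 3, show n₃ ≥ 4
    have hn3 : 4 ≤ n₃ := by
      by_contra hlt
      push_neg at hlt
      have e1 : n₁ = 3 := by omega
      have e2 : n₂ = 3 := by omega
      have e3 : n₃ = 3 := by omega
      rw [e1, e2, e3] at hhyp
      norm_num at hhyp
    have hc1' : Real.cos (π / 3) ≤ Real.cos (π / n₁) :=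
      cos_pi_div_mono 3 n₁ (by norm_num) hn1
    have hc2' : Real.cos (π / 3) ≤ Real.cos (π / n₂) :=
      cos_pi_div_mono 3 n₂ (by norm_num) (le_trans hn1 h12)
    have hc3 : Real.cos (π / 4) ≤ Real.cos (π / n₃) :=
      cos_pi_div_mono 4 n₃ (by norm_num) hn3
    have hlb := cos_pi_div_lb 4 (by norm_num)
    have hcos3 : Real.cos (π / 3) = 1/2 := Real.cos_pi_div_three
    rw [hcos3] at hc1' hc2'
    push_cast at hlb
    nlinarith

theorem quadratic_has_real_root (n₁ n₂ n₃ : ℕ)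
    (h2 : 2 ≤ n₁) (h12 : n₁ ≤ n₂) (h23 : n₂ ≤ n₃)
    (hhyp : (1 : ℝ) / n₁ + 1 / n₂ + 1 / n₃ < 1) :
    (2 * (Real.cos (π / n₁) - Real.cos (π / n₂))) ^ 2 -
      4 * (2 * (1 - 2 * Real.cos (π / n₁) * Real.cos (π / n₂) - Real.cos (π / n₃))) ≥ 0 ∧
    ∃ r : ℝ, r ^ 2 + 2 * r * (Real.cos (π / n₁) - Real.cos (π / n₂)) +
      2 * (1 - 2 * Real.cos (π / n₁) * Real.cos (π / n₂) - Real.cos (π / n₃)) = 0 := by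
  have hkey := key_ineq n₁ n₂ n₃ h2 h12 h23 hhyp
  set c₁ := Real.cos (π / n₁)
  set c₂ := Real.cos (π / n₂)
  set c₃ := Real.cos (π / n₃)
  have hD : (2 * (c₁ - c₂)) ^ 2 - 4 * (2 * (1 - 2 * c₁ * c₂ - c₃)) ≥ 0 := by
    nlinarith
  refine ⟨hD, ?_⟩
  set D := (2 * (c₁ - c₂)) ^ 2 - 4 * (2 * (1 - 2 * c₁ * c₂ - c₃)) with hDdef
  refine ⟨(-(2 * (c₁ - c₂)) + Real.sqrt D) / 2, ?_⟩
  have hs : Real.sqrt D ^ 2 = D := Real.sq_sqrt hD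
  nlinarith [hs]
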